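/- With f, g and the differential Sylvester matrix V = V(f,g) as above, the degree in ∂ of gcrd(f,g) equals the dimension of the left nullspace of V over R(t). -/

import Mathlib

open Polynomial

noncomputable def ratDeriv (q : RatFunc ℝ) : RatFunc ℝ :=
  (algebraMap (Polynomial ℝ) (RatFunc ℝ) (derivative q.num) *
      algebraMap (Polynomial ℝ) (RatFunc ℝ) q.denom -
    algebraMap (Polynomial ℝ) (RatFunc ℝ) q.num *
      algebraMap (Polynomial ℝ) (RatFunc ℝ) (derivative q.denom)) /
    (algebraMap (Polynomial ℝ) (RatFunc ℝ) q.denom) ^ 2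

local notation "K" => RatFunc ℝ
local notation "φ" => algebraMap (Polynomial ℝ) (RatFunc ℝ)

lemma phi_ne_zero {q : Polynomial ℝ} (hq : q ≠ 0) : φ q ≠ 0 := by
  simpa using (map_ne_zero_iff _ (RatFunc.algebraMap_injective ℝ)).mpr hq

lemma ratDeriv_div (p q : Polynomial ℝ) (hq : q ≠ 0) :
    ratDeriv (φ p / φ q) =
      (φ (derivative p) * φ q - φ p * φ (derivative q)) / (φ q) ^ 2 := by
  set x : K := φ p / φ q with hx
  have hD : (x.denom : Polynomial ℝ) ≠ 0 := x.denom_ne_zero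
  have hDK : φ x.denom ≠ 0 := phi_ne_zero hD
  have hQK : φ q ≠ 0 := phi_ne_zero hq
  have hnd : φ x.num / φ x.denom = φ p / φ q := by rw [RatFunc.num_div_denom]
  rw [div_eq_div_iff hDK hQK] at hnd
  have hpoly : x.num * q = p * x.denom :=
    RatFunc.algebraMap_injective ℝ (by rw [map_mul, map_mul]; exact hnd)
  have hder := congrArg derivative hpoly
  rw [derivative_mul, derivative_mul] at hder
  have hderK := congrArg φ hder
  rw [map_add, map_add, map_mul, map_mul, map_mul, map_mul] at hderK
  show (φ (derivative x.num) * φ x.denom - φ x.num * φ (derivative x.denom)) /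
      (φ x.denom) ^ 2 = _
  rw [div_eq_div_iff (pow_ne_zero 2 hDK) (pow_ne_zero 2 hQK)]
  linear_combination (-(φ (derivative x.denom) * φ q + φ (derivative q) * φ x.denom)) * hnd
    + φ x.denom * φ q * hderK

lemma ratDeriv_eq (a : K) :
    ratDeriv a = (φ (derivative a.num) * φ a.denom - φ a.num * φ (derivative a.denom)) /
      (φ a.denom) ^ 2 := rfl

lemma ratDeriv_add (a b : K) : ratDeriv (a + b) = ratDeriv a + ratDeriv b := by
  obtain ⟨Na, Da, hDa, ha⟩ : ∃ Na Da, Da ≠ 0 ∧ a = φ Na / φ Da :=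
    ⟨a.num, a.denom, a.denom_ne_zero, (RatFunc.num_div_denom a).symm⟩
  obtain ⟨Nb, Db, hDb, hb⟩ : ∃ Nb Db, Db ≠ 0 ∧ b = φ Nb / φ Db :=
    ⟨b.num, b.denom, b.denom_ne_zero, (RatFunc.num_div_denom b).symm⟩
  subst ha hb
  have hDaK : φ Da ≠ 0 := phi_ne_zero hDa
  have hDbK : φ Db ≠ 0 := phi_ne_zero hDb
  have h2 : φ Na / φ Da + φ Nb / φ Db = φ (Na * Db + Nb * Da) / φ (Da * Db) := by
    rw [map_add, map_mul, map_mul, map_mul]; field_simp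
  rw [h2, ratDeriv_div _ _ (mul_ne_zero hDa hDb), ratDeriv_div _ _ hDa, ratDeriv_div _ _ hDb]
  simp only [derivative_add, derivative_mul, map_add, map_mul]
  field_simp
  ring

lemma ratDeriv_mul (a b : K) : ratDeriv (a * b) = ratDeriv a * b + a * ratDeriv b := by
  obtain ⟨Na, Da, hDa, ha⟩ : ∃ Na Da, Da ≠ 0 ∧ a = φ Na / φ Da :=
    ⟨a.num, a.denom, a.denom_ne_zero, (RatFunc.num_div_denom a).symm⟩
  obtain ⟨Nb, Db, hDb, hb⟩ : ∃ Nb Db, Db ≠ 0 ∧ b = φ Nb / φ Db :=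
    ⟨b.num, b.denom, b.denom_ne_zero, (RatFunc.num_div_denom b).symm⟩
  subst ha hb
  have hDaK : φ Da ≠ 0 := phi_ne_zero hDa
  have hDbK : φ Db ≠ 0 := phi_ne_zero hDb
  have h2 : φ Na / φ Da * (φ Nb / φ Db) = φ (Na * Nb) / φ (Da * Db) := by
    rw [map_mul, map_mul, div_mul_div_comm]
  rw [h2, ratDeriv_div _ _ (mul_ne_zero hDa hDb), ratDeriv_div _ _ hDa, ratDeriv_div _ _ hDb]
  simp only [derivative_mul, map_add, map_mul]
  field_simp
  ring

lemma ratDeriv_zero : ratDeriv 0 = 0 := by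
  have h := ratDeriv_add 0 0
  rw [add_zero] at h
  exact (left_eq_add.mp h)

noncomputable def dMul (g : Polynomial (RatFunc ℝ)) : Polynomial (RatFunc ℝ) :=
  X * g + g.sum fun i a => C (ratDeriv a) * X ^ i

lemma coeff_sumDeriv (p : Polynomial K) (j : ℕ) :
    (p.sum fun i a => C (ratDeriv a) * X ^ i).coeff j = ratDeriv (p.coeff j) := by
  rw [Polynomial.coeff_sum, Polynomial.sum_def]
  simp only [coeff_C_mul, coeff_X_pow, mul_ite, mul_one, mul_zero]
  rw [Finset.sum_ite_eq p.support j (fun i => ratDeriv (p.coeff i))]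
  by_cases h : j ∈ p.support
  · simp [h]
  · simp [h, notMem_support_iff.mp h, ratDeriv_zero]

lemma coeff_dMul_succ (p : Polynomial K) (j : ℕ) :
    (dMul p).coeff (j+1) = p.coeff j + ratDeriv (p.coeff (j+1)) := by
  rw [dMul, coeff_add, coeff_X_mul, coeff_sumDeriv]

lemma coeff_dMul_zero (p : Polynomial K) :
    (dMul p).coeff 0 = ratDeriv (p.coeff 0) := by
  rw [dMul, coeff_add, mul_coeff_zero, coeff_X_zero, zero_mul, zero_add, coeff_sumDeriv]

lemma dMul_add (p q : Polynomial K) : dMul (p + q) = dMul p + dMul q := by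
  ext j
  cases j with
  | zero => simp [coeff_dMul_zero, ratDeriv_add]
  | succ j => simp [coeff_dMul_succ, ratDeriv_add]; ring

lemma dMul_zero : dMul 0 = 0 := by
  ext j
  cases j with
  | zero => simp [coeff_dMul_zero, ratDeriv_zero]
  | succ j => simp [coeff_dMul_succ, ratDeriv_zero]

lemma dMul_C_mul (a : K) (q : Polynomial K) :
    dMul (C a * q) = C a * dMul q + C (ratDeriv a) * q := by
  ext j
  cases j with
  | zero => simp [coeff_dMul_zero, ratDeriv_mul]; ring
  | succ j => simp [coeff_dMul_succ, ratDeriv_mul]; ring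

lemma coeff_dMul_eq_zero (p : Polynomial K) (j : ℕ) (hj : p.natDegree < j) :
    (dMul p).coeff (j+1) = 0 := by
  rw [coeff_dMul_succ, coeff_eq_zero_of_natDegree_lt hj,
    coeff_eq_zero_of_natDegree_lt (Nat.lt_succ_of_lt hj), ratDeriv_zero, add_zero]

lemma coeff_dMul_top (p : Polynomial K) :
    (dMul p).coeff (p.natDegree + 1) = p.leadingCoeff := by
  rw [coeff_dMul_succ, coeff_eq_zero_of_natDegree_lt (Nat.lt_succ_self _), ratDeriv_zero,
    add_zero, leadingCoeff]

lemma dMul_ne_zero (p : Polynomial K) (hp : p ≠ 0) : dMul p ≠ 0 := fun h => by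
  have := coeff_dMul_top p
  rw [h, coeff_zero] at this
  exact hp (leadingCoeff_eq_zero.mp this.symm)

lemma natDegree_dMul (p : Polynomial K) (hp : p ≠ 0) :
    (dMul p).natDegree = p.natDegree + 1 := by
  refine le_antisymm ?_ (le_natDegree_of_ne_zero ?_)
  · refine natDegree_le_iff_coeff_eq_zero.mpr fun j hj => ?_
    obtain ⟨k, rfl⟩ := Nat.exists_eq_add_of_lt hj
    rw [show p.natDegree + 1 + k = (p.natDegree + k) + 1 by ring]
    exact coeff_dMul_eq_zero p _ (by omega)
  · rw [coeff_dMul_top]; exact leadingCoeff_ne_zero.mpr hp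

lemma leadingCoeff_dMul (p : Polynomial K) (hp : p ≠ 0) :
    (dMul p).leadingCoeff = p.leadingCoeff := by
  rw [leadingCoeff, natDegree_dMul p hp, coeff_dMul_top]
noncomputable def skewMul (f g : Polynomial (RatFunc ℝ)) : Polynomial (RatFunc ℝ) :=
  f.sum fun i a => C a * dMul^[i] g

lemma dMul_iter_zero (i : ℕ) : dMul^[i] (0 : Polynomial K) = 0 := by
  induction i with
  | zero => rfl
  | succ i ih => rw [Function.iterate_succ_apply', ih, dMul_zero]

lemma dMul_iter_add (f g : Polynomial K) (i : ℕ) :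
    dMul^[i] (f + g) = dMul^[i] f + dMul^[i] g := by
  induction i with
  | zero => rfl
  | succ i ih => rw [Function.iterate_succ_apply', Function.iterate_succ_apply',
      Function.iterate_succ_apply', ih, dMul_add]

lemma natDegree_dMul_iter_le (f : Polynomial K) (i : ℕ) :
    (dMul^[i] f).natDegree ≤ f.natDegree + i := by
  induction i with
  | zero => simp
  | succ i ih =>
    rw [Function.iterate_succ_apply']
    by_cases h : dMul^[i] f = 0
    · simp [h, dMul_zero]
    · rw [natDegree_dMul _ h]; omega

lemma dMul_iter_ne_zero (f : Polynomial K) (hf : f ≠ 0) (i : ℕ) :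
    dMul^[i] f ≠ 0 ∧ (dMul^[i] f).natDegree = f.natDegree + i ∧
      (dMul^[i] f).leadingCoeff = f.leadingCoeff := by
  induction i with
  | zero => exact ⟨hf, by simp, by simp⟩
  | succ i ih =>
    obtain ⟨h1, h2, h3⟩ := ih
    refine ⟨?_, ?_, ?_⟩
    · rw [Function.iterate_succ_apply']; exact dMul_ne_zero _ h1
    · rw [Function.iterate_succ_apply', natDegree_dMul _ h1, h2]; omega
    · rw [Function.iterate_succ_apply', leadingCoeff_dMul _ h1, h3]

lemma skewMul_eq_sum (p f : Polynomial K) (N : ℕ) (h : p.natDegree < N) :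
    skewMul p f = ∑ i ∈ Finset.range N, C (p.coeff i) * dMul^[i] f :=
  Polynomial.sum_over_range' p (fun n => by simp) N h

lemma skewMul_zero_left (f : Polynomial K) : skewMul 0 f = 0 := by
  rw [skewMul, Polynomial.sum_zero_index]

lemma skewMul_zero_right (p : Polynomial K) : skewMul p 0 = 0 := by
  rw [skewMul]
  simp [Polynomial.sum, dMul_iter_zero]

lemma skewMul_add_left (p q f : Polynomial K) :
    skewMul (p + q) f = skewMul p f + skewMul q f :=
  Polynomial.sum_add_index p q _ (fun i => by simp) (fun a b₁ b₂ => by rw [C_add, add_mul])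

lemma skewMul_C_mul_left (a : K) (p f : Polynomial K) :
    skewMul (C a * p) f = C a * skewMul p f := by
  rw [skewMul_eq_sum (C a * p) f (p.natDegree + 1)
      (Nat.lt_succ_of_le (natDegree_C_mul_le a p)),
    skewMul_eq_sum p f (p.natDegree + 1) (Nat.lt_succ_self _), Finset.mul_sum]
  exact Finset.sum_congr rfl fun i _ => by rw [coeff_C_mul, C_mul, mul_assoc]

lemma skewMul_add_right (p f g : Polynomial K) :
    skewMul p (f + g) = skewMul p f + skewMul p g := by
  rw [skewMul_eq_sum p _ _ (Nat.lt_succ_self _), skewMul_eq_sum p f _ (Nat.lt_succ_self _),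
    skewMul_eq_sum p g _ (Nat.lt_succ_self _), ← Finset.sum_add_distrib]
  exact Finset.sum_congr rfl fun i _ => by rw [dMul_iter_add, mul_add]

lemma skewMul_neg_left (p f : Polynomial K) : skewMul (-p) f = -skewMul p f := by
  have := skewMul_add_left p (-p) f
  rw [add_neg_cancel, skewMul_zero_left] at this
  exact eq_neg_of_add_eq_zero_right this.symm

lemma skewMul_sub_left (p q f : Polynomial K) :
    skewMul (p - q) f = skewMul p f - skewMul q f := by
  rw [sub_eq_add_neg, skewMul_add_left, skewMul_neg_left, sub_eq_add_neg]

lemma skewMul_X_pow (i : ℕ) (f : Polynomial K) : skewMul (X ^ i) f = dMul^[i] f := by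
  rw [skewMul, X_pow_eq_monomial, Polynomial.sum_monomial_index _ _ (by simp), C_1, one_mul]

lemma skewMul_monomial (a : K) (i : ℕ) (f : Polynomial K) :
    skewMul (C a * X ^ i) f = C a * dMul^[i] f := by
  rw [skewMul_C_mul_left, skewMul_X_pow]

noncomputable def dMulHom : Polynomial K →+ Polynomial K :=
  { toFun := dMul, map_zero' := dMul_zero, map_add' := dMul_add }

noncomputable def skewMulHom (f : Polynomial K) : Polynomial K →+ Polynomial K :=
  { toFun := fun p => skewMul p f, map_zero' := skewMul_zero_left f,
    map_add' := fun p q => skewMul_add_left p q f }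

lemma natDegree_sumDeriv_le (p : Polynomial K) :
    (p.sum fun i a => C (ratDeriv a) * X ^ i).natDegree ≤ p.natDegree := by
  refine natDegree_le_iff_coeff_eq_zero.mpr fun j hj => ?_
  rw [coeff_sumDeriv, coeff_eq_zero_of_natDegree_lt hj, ratDeriv_zero]

lemma dMul_skewMul (p f : Polynomial K) :
    dMul (skewMul p f) = skewMul (dMul p) f := by
  set N := p.natDegree + 1 with hN
  have h1 : skewMul p f = ∑ i ∈ Finset.range N, C (p.coeff i) * dMul^[i] f :=
    skewMul_eq_sum p f N (Nat.lt_succ_self _)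
  have hXp : (X * p).natDegree < N + 1 := by
    calc (X * p).natDegree ≤ X.natDegree + p.natDegree := natDegree_mul_le
    _ < N + 1 := by rw [natDegree_X]; omega
  have hsd : (p.sum fun i a => C (ratDeriv a) * X ^ i).natDegree < N + 1 :=
    lt_of_le_of_lt (natDegree_sumDeriv_le p) (by omega)
  have hmap : dMul (∑ i ∈ Finset.range N, C (p.coeff i) * dMul^[i] f)
      = ∑ i ∈ Finset.range N, dMulHom (C (p.coeff i) * dMul^[i] f) :=
    map_sum dMulHom _ _
  rw [h1, hmap]
  have lhs_eq : ∀ i ∈ Finset.range N,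
      dMulHom (C (p.coeff i) * dMul^[i] f)
        = C (p.coeff i) * dMul^[i+1] f + C (ratDeriv (p.coeff i)) * dMul^[i] f := by
    intro i _
    show dMul _ = _
    rw [dMul_C_mul, Function.iterate_succ_apply']
  rw [Finset.sum_congr rfl lhs_eq, Finset.sum_add_distrib]
  rw [dMul, skewMul_add_left]
  congr 1
  · rw [skewMul_eq_sum (X * p) f (N+1) hXp]
    refine Eq.symm ((Finset.sum_range_succ' _ N).trans ?_)
    simp only [coeff_X_mul, mul_coeff_zero, coeff_X_zero, zero_mul, map_zero, add_zero]
  · rw [skewMul_eq_sum _ f N (lt_of_le_of_lt (natDegree_sumDeriv_le p) (Nat.lt_succ_self _))]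
    exact Finset.sum_congr rfl fun i _ => by rw [coeff_sumDeriv]

lemma dMul_iter_skewMul (p f : Polynomial K) (j : ℕ) :
    dMul^[j] (skewMul p f) = skewMul (dMul^[j] p) f := by
  induction j with
  | zero => rfl
  | succ j ih => rw [Function.iterate_succ_apply', Function.iterate_succ_apply', ih, dMul_skewMul]

lemma skewMul_assoc (u v f : Polynomial K) :
    skewMul (skewMul u v) f = skewMul u (skewMul v f) := by
  rw [skewMul_eq_sum u (skewMul v f) (u.natDegree+1) (Nat.lt_succ_self _),
    skewMul_eq_sum u v (u.natDegree+1) (Nat.lt_succ_self _)]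
  refine (map_sum (skewMulHom f) _ _).trans ?_
  refine Finset.sum_congr rfl fun i _ => ?_
  show skewMul _ f = _
  rw [skewMul_C_mul_left, dMul_iter_skewMul]

lemma coeff_skewMul (u f : Polynomial K) (j : ℕ) :
    (skewMul u f).coeff j =
      ∑ i ∈ Finset.range (u.natDegree+1), u.coeff i * (dMul^[i] f).coeff j := by
  rw [skewMul_eq_sum u f _ (Nat.lt_succ_self _), Polynomial.finset_sum_coeff]
  exact Finset.sum_congr rfl fun i _ => by rw [coeff_C_mul]

lemma natDegree_skewMul_le (u f : Polynomial K) :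
    (skewMul u f).natDegree ≤ u.natDegree + f.natDegree := by
  refine natDegree_le_iff_coeff_eq_zero.mpr fun j hj => ?_
  rw [coeff_skewMul]
  refine Finset.sum_eq_zero fun i hi => ?_
  rw [Finset.mem_range] at hi
  rw [coeff_eq_zero_of_natDegree_lt (lt_of_le_of_lt (natDegree_dMul_iter_le f i) (by omega)),
    mul_zero]

lemma coeff_skewMul_top (u f : Polynomial K) (hf : f ≠ 0) :
    (skewMul u f).coeff (u.natDegree + f.natDegree) = u.leadingCoeff * f.leadingCoeff := by
  rw [coeff_skewMul, Finset.sum_range_succ]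
  have hz : ∀ i ∈ Finset.range u.natDegree,
      u.coeff i * (dMul^[i] f).coeff (u.natDegree + f.natDegree) = 0 := by
    intro i hi
    rw [Finset.mem_range] at hi
    obtain ⟨-, hd, -⟩ := dMul_iter_ne_zero f hf i
    rw [coeff_eq_zero_of_natDegree_lt
      (show (dMul^[i] f).natDegree < u.natDegree + f.natDegree by omega), mul_zero]
  rw [Finset.sum_congr rfl hz, Finset.sum_const_zero, zero_add]
  obtain ⟨-, hd, hl⟩ := dMul_iter_ne_zero f hf u.natDegree
  rw [show u.natDegree + f.natDegree = (dMul^[u.natDegree] f).natDegree by omega]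
  exact congrArg (fun z => u.leadingCoeff * z) hl

lemma skewMul_props (u f : Polynomial K) (hu : u ≠ 0) (hf : f ≠ 0) :
    skewMul u f ≠ 0 ∧ (skewMul u f).natDegree = u.natDegree + f.natDegree ∧
      (skewMul u f).leadingCoeff = u.leadingCoeff * f.leadingCoeff := by
  have htop := coeff_skewMul_top u f hf
  have hne : (skewMul u f).coeff (u.natDegree + f.natDegree) ≠ 0 := by
    rw [htop]
    exact mul_ne_zero (leadingCoeff_ne_zero.mpr hu) (leadingCoeff_ne_zero.mpr hf)
  have h0 : skewMul u f ≠ 0 := fun h => by simp [h] at hne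
  have hdeg : (skewMul u f).natDegree = u.natDegree + f.natDegree :=
    le_antisymm (natDegree_skewMul_le u f) (le_natDegree_of_ne_zero hne)
  exact ⟨h0, hdeg, by rw [leadingCoeff, hdeg, htop]⟩

lemma skewMul_eq_zero_iff (u f : Polynomial K) :
    skewMul u f = 0 ↔ u = 0 ∨ f = 0 := by
  constructor
  · intro h
    by_contra hc
    push_neg at hc
    exact (skewMul_props u f hc.1 hc.2).1 h
  · rintro (rfl | rfl)
    · exact skewMul_zero_left f
    · exact skewMul_zero_right u

lemma degree_skewMul (u f : Polynomial K) (hu : u ≠ 0) (hf : f ≠ 0) :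
    (skewMul u f).degree = u.degree + f.degree := by
  obtain ⟨h0, hdeg, -⟩ := skewMul_props u f hu hf
  rw [degree_eq_natDegree h0, degree_eq_natDegree hu, degree_eq_natDegree hf, hdeg]
  push_cast
  ring

lemma skew_div_aux (h : Polynomial K) (hh : h ≠ 0) :
    ∀ n : ℕ, ∀ f : Polynomial K, f.natDegree ≤ n →
      ∃ q r, f = skewMul q h + r ∧ r.degree < h.degree ∧
        (q = 0 ∨ q.natDegree + h.natDegree ≤ f.natDegree) := by
  intro n
  induction n using Nat.strong_induction_on with
  | _ n ih =>
    intro f hfn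
    by_cases hlt : f.degree < h.degree
    · exact ⟨0, f, by rw [skewMul_zero_left, zero_add], hlt, Or.inl rfl⟩
    push_neg at hlt
    have hf0 : f ≠ 0 := by
      intro h0
      rw [h0, degree_zero, le_bot_iff, degree_eq_bot] at hlt
      exact hh hlt
    have hnd : h.natDegree ≤ f.natDegree := natDegree_le_natDegree hlt
    set c : K := f.leadingCoeff / h.leadingCoeff with hc
    have hc0 : c ≠ 0 :=
      div_ne_zero (leadingCoeff_ne_zero.mpr hf0) (leadingCoeff_ne_zero.mpr hh)
    set t : Polynomial K := skewMul (C c * X ^ (f.natDegree - h.natDegree)) h with ht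
    have hm0 : (C c * X ^ (f.natDegree - h.natDegree)) ≠ 0 := by
      apply mul_ne_zero (by simpa using hc0) (pow_ne_zero _ X_ne_zero)
    obtain ⟨ht0, htd, htl⟩ := skewMul_props _ h hm0 hh
    have hmnd : (C c * X ^ (f.natDegree - h.natDegree)).natDegree
        = f.natDegree - h.natDegree := by
      rw [natDegree_C_mul hc0, natDegree_X_pow]
    have htd' : t.natDegree = f.natDegree := by rw [ht, htd, hmnd]; omega
    have htl' : t.leadingCoeff = f.leadingCoeff := by
      rw [ht, htl, leadingCoeff_mul, leadingCoeff_C, leadingCoeff_X_pow, mul_one, hc]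
      exact div_mul_cancel₀ _ (leadingCoeff_ne_zero.mpr hh)
    have hdegeq : f.degree = t.degree := by
      rw [degree_eq_natDegree hf0, degree_eq_natDegree ht0, htd']
    have hsub : (f - t).degree < f.degree := degree_sub_lt hdegeq hf0 htl'.symm
    by_cases hft : f - t = 0
    · refine ⟨C c * X ^ (f.natDegree - h.natDegree), 0, ?_, ?_, Or.inr (by rw [hmnd]; omega)⟩
      · rw [← ht, add_zero, ← sub_eq_zero, hft]
      · rw [degree_zero]
        exact bot_lt_iff_ne_bot.mpr (fun hb => hh (degree_eq_bot.mp hb))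
    · have hnlt : (f - t).natDegree < f.natDegree := natDegree_lt_natDegree hft hsub
      have hlt2 : (f - t).natDegree < n := lt_of_lt_of_le hnlt hfn
      obtain ⟨q', r', he, hr, hqb⟩ := ih _ hlt2 (f - t) le_rfl
      refine ⟨C c * X ^ (f.natDegree - h.natDegree) + q', r', ?_, hr, ?_⟩
      · rw [skewMul_add_left, ← ht]
        linear_combination he
      · refine Or.inr ?_
        have h1 : (C c * X ^ (f.natDegree - h.natDegree) + q').natDegree
            ≤ f.natDegree - h.natDegree := by
          refine le_trans (natDegree_add_le _ _) ?_
          rcases hqb with rfl | hqb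
          · simp [hmnd]
          · rw [hmnd]; omega
        omega

lemma skew_div (f h : Polynomial K) (hh : h ≠ 0) :
    ∃ q r, f = skewMul q h + r ∧ r.degree < h.degree ∧
      (q = 0 ∨ q.natDegree + h.natDegree ≤ f.natDegree) :=
  skew_div_aux h hh f.natDegree f le_rfl

lemma skewMul_neg_right (p f : Polynomial K) : skewMul p (-f) = -skewMul p f := by
  have := skewMul_add_right p f (-f)
  rw [add_neg_cancel, skewMul_zero_right] at this
  exact eq_neg_of_add_eq_zero_right this.symm

lemma skewMul_one_left (f : Polynomial K) : skewMul 1 f = f := by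
  have : (1 : Polynomial K) = C 1 * X ^ 0 := by simp
  rw [this, skewMul_monomial, C_1, one_mul, Function.iterate_zero_apply]

def InIdeal (f g p : Polynomial (RatFunc ℝ)) : Prop :=
  ∃ u v, p = skewMul u f + skewMul v g

def SkewRightDvd (h f : Polynomial (RatFunc ℝ)) : Prop := ∃ u, f = skewMul u h

lemma inIdeal_self_left (f g : Polynomial K) : InIdeal f g f :=
  ⟨1, 0, by rw [skewMul_one_left, skewMul_zero_left, add_zero]⟩

lemma inIdeal_self_right (f g : Polynomial K) : InIdeal f g g :=
  ⟨0, 1, by rw [skewMul_one_left, skewMul_zero_left, zero_add]⟩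

lemma inIdeal_sub {f g p q : Polynomial K} (hp : InIdeal f g p) (hq : InIdeal f g q) :
    InIdeal f g (p - q) := by
  obtain ⟨u1, v1, rfl⟩ := hp
  obtain ⟨u2, v2, rfl⟩ := hq
  exact ⟨u1 - u2, v1 - v2, by rw [skewMul_sub_left, skewMul_sub_left]; ring⟩

lemma inIdeal_smul {f g p : Polynomial K} (w : Polynomial K) (hp : InIdeal f g p) :
    InIdeal f g (skewMul w p) := by
  obtain ⟨u, v, rfl⟩ := hp
  exact ⟨skewMul w u, skewMul w v, by
    rw [skewMul_add_right, skewMul_assoc, skewMul_assoc]⟩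

lemma rightDvd_inIdeal {f g h p : Polynomial K} (hf : SkewRightDvd h f) (hg : SkewRightDvd h g)
    (hp : InIdeal f g p) : SkewRightDvd h p := by
  obtain ⟨u, v, rfl⟩ := hp
  obtain ⟨w1, rfl⟩ := hf
  obtain ⟨w2, rfl⟩ := hg
  exact ⟨skewMul u w1 + skewMul v w2, by
    rw [skewMul_add_left, skewMul_assoc, skewMul_assoc]⟩

lemma natDegree_le_of_rightDvd {h d : Polynomial K} (hdvd : SkewRightDvd h d) (hd : d ≠ 0) :
    h ≠ 0 ∧ h.natDegree ≤ d.natDegree := by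
  obtain ⟨w, rfl⟩ := hdvd
  have hw : w ≠ 0 := fun hw => hd (by rw [hw, skewMul_zero_left])
  have hh : h ≠ 0 := fun hh => hd (by rw [hh, skewMul_zero_right])
  obtain ⟨-, hdeg, -⟩ := skewMul_props w h hw hh
  exact ⟨hh, by omega⟩

lemma exists_min_inIdeal (f g : Polynomial K) (hf : f ≠ 0) :
    ∃ d, InIdeal f g d ∧ d ≠ 0 ∧
      ∀ p, InIdeal f g p → p ≠ 0 → d.natDegree ≤ p.natDegree := by
  have hne : ∃ k, ∃ p, InIdeal f g p ∧ p ≠ 0 ∧ p.natDegree = k :=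
    ⟨f.natDegree, f, inIdeal_self_left f g, hf, rfl⟩
  classical
  obtain ⟨p, hp1, hp2, hp3⟩ := Nat.find_spec hne
  refine ⟨p, hp1, hp2, fun q hq1 hq2 => ?_⟩
  rw [hp3]
  exact Nat.find_min' hne ⟨q, hq1, hq2, rfl⟩

lemma min_rightDvd {f g d : Polynomial K}
    (hd : InIdeal f g d) (hd0 : d ≠ 0)
    (hmin : ∀ p, InIdeal f g p → p ≠ 0 → d.natDegree ≤ p.natDegree)
    {p : Polynomial K} (hp : InIdeal f g p) : SkewRightDvd d p := by
  obtain ⟨q, r, heq, hdeg, -⟩ := skew_div p d hd0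
  have hr : InIdeal f g r := by
    have : r = p - skewMul q d := by linear_combination -heq
    rw [this]
    exact inIdeal_sub hp (inIdeal_smul q hd)
  by_cases hr0 : r = 0
  · exact ⟨q, by rw [heq, hr0, add_zero]⟩
  · exfalso
    have h1 := hmin r hr hr0
    have h2 : r.natDegree < d.natDegree := by
      rw [degree_eq_natDegree hr0, degree_eq_natDegree hd0] at hdeg
      exact_mod_cast hdeg
    omega

def IsGCRD (f g h : Polynomial (RatFunc ℝ)) : Prop :=
  SkewRightDvd h f ∧ SkewRightDvd h g ∧
    ∀ h2, SkewRightDvd h2 f → SkewRightDvd h2 g → h2.degree ≤ h.degree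

lemma skewMul_sub_right (p f g : Polynomial K) :
    skewMul p (f - g) = skewMul p f - skewMul p g := by
  rw [sub_eq_add_neg, skewMul_add_right, skewMul_neg_right, sub_eq_add_neg]

lemma gcrd_natDegree_eq_min {f g d h : Polynomial K} (hf : f ≠ 0) (hg : g ≠ 0)
    (hd : InIdeal f g d) (hd0 : d ≠ 0)
    (hmin : ∀ p, InIdeal f g p → p ≠ 0 → d.natDegree ≤ p.natDegree)
    (hG : IsGCRD f g h) : h.natDegree = d.natDegree := by
  obtain ⟨hGf, hGg, hGmax⟩ := hG
  -- h divides d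
  have hdvd : SkewRightDvd h d := rightDvd_inIdeal hGf hGg hd
  obtain ⟨hh0, hle⟩ := natDegree_le_of_rightDvd hdvd hd0
  -- d divides f and g, so degree d ≤ degree h
  have hdf : SkewRightDvd d f := min_rightDvd hd hd0 hmin (inIdeal_self_left f g)
  have hdg : SkewRightDvd d g := min_rightDvd hd hd0 hmin (inIdeal_self_right f g)
  have hdegle : d.degree ≤ h.degree := hGmax d hdf hdg
  rw [degree_eq_natDegree hd0, degree_eq_natDegree hh0] at hdegle
  have : d.natDegree ≤ h.natDegree := by exact_mod_cast hdegle
  omega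

lemma syzygy_aux : ∀ N : ℕ, ∀ g f : Polynomial K, g ≠ 0 → g.natDegree ≤ N →
    ∃ a b, skewMul a f + skewMul b g = 0 ∧ a ≠ 0 ∧
      a.natDegree ≤ g.natDegree ∧ b.natDegree ≤ f.natDegree := by
  intro N
  induction N using Nat.strong_induction_on with
  | _ N ih =>
    intro g f hg hgN
    by_cases hf : f = 0
    · exact ⟨1, 0, by rw [hf, skewMul_zero_right, skewMul_zero_left, add_zero], one_ne_zero,
        by simp, by simp⟩
    obtain ⟨q, r, heq, hdeg, hqb⟩ := skew_div f g hg
    by_cases hr : r = 0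
    · refine ⟨1, -q, ?_, one_ne_zero, by simp, ?_⟩
      · rw [skewMul_one_left, skewMul_neg_left, heq, hr, add_zero]
        ring
      · rw [natDegree_neg]
        rcases hqb with rfl | hqb
        · simp
        · omega
    · have hrdeg : r.natDegree < g.natDegree := by
        rw [degree_eq_natDegree hr, degree_eq_natDegree hg] at hdeg
        exact_mod_cast hdeg
      obtain ⟨a', b', hsyz, ha', ha'd, hb'd⟩ := ih r.natDegree (by omega) r g hr le_rfl
      -- a' g + b' r = 0 with roles: skewMul a' g + skewMul b' r = 0
      have hb'0 : b' ≠ 0 := by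
        intro hb0
        rw [hb0, skewMul_zero_left, add_zero, skewMul_eq_zero_iff] at hsyz
        rcases hsyz with h1 | h1
        · exact ha' h1
        · exact hg h1
      refine ⟨b', a' - skewMul b' q, ?_, hb'0, by omega, ?_⟩
      · have hr' : r = f - skewMul q g := by linear_combination -heq
        rw [skewMul_sub_left, skewMul_assoc]
        rw [hr', skewMul_sub_right] at hsyz
        linear_combination hsyz
      · refine le_trans (natDegree_sub_le _ _) (max_le ?_ ?_)
        · rcases hqb with rfl | hqb2
          · have hrf : r = f := by rw [heq, skewMul_zero_left, zero_add]
            rw [← hrf]; omega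
          · omega
        · rcases hqb with rfl | hqb
          · simp [skewMul_zero_right]
          · refine le_trans (natDegree_skewMul_le _ _) (by omega)

lemma syzygy (f g : Polynomial K) (hg : g ≠ 0) :
    ∃ a b, skewMul a f + skewMul b g = 0 ∧ a ≠ 0 ∧
      a.natDegree ≤ g.natDegree ∧ b.natDegree ≤ f.natDegree :=
  syzygy_aux g.natDegree g f hg le_rfl

lemma bounded_rep {f g : Polynomial K} (hf : f ≠ 0) (hg : g ≠ 0)
    {p : Polynomial K} (hp : InIdeal f g p)
    (hdeg : p.natDegree < f.natDegree + g.natDegree) (hp0 : p ≠ 0) :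
    ∃ u v, p = skewMul u f + skewMul v g ∧
      (u = 0 ∨ u.natDegree < g.natDegree) ∧ (v = 0 ∨ v.natDegree < f.natDegree) := by
  obtain ⟨u0, v0, hrep⟩ := hp
  obtain ⟨a, b, hsyz, ha0, had, hbd⟩ := syzygy f g hg
  obtain ⟨q, r, hu0, hrd, -⟩ := skew_div u0 a ha0
  set v : Polynomial K := v0 - skewMul q b with hv
  have hbg : skewMul a f = -skewMul b g := by linear_combination hsyz
  have hrep2 : p = skewMul r f + skewMul v g := by
    rw [hv, skewMul_sub_left, skewMul_assoc, hrep, hu0, skewMul_add_left, skewMul_assoc, hbg,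
      skewMul_neg_right]
    ring
  have hub : r = 0 ∨ r.natDegree < g.natDegree := by
    by_cases hr0 : r = 0
    · exact Or.inl hr0
    · refine Or.inr ?_
      rw [degree_eq_natDegree hr0, degree_eq_natDegree ha0] at hrd
      have : r.natDegree < a.natDegree := by exact_mod_cast hrd
      omega
  refine ⟨r, v, hrep2, hub, ?_⟩
  by_cases hv0 : v = 0
  · exact Or.inl hv0
  refine Or.inr ?_
  obtain ⟨-, hvg, -⟩ := skewMul_props v g hv0 hg
  have hvgr : skewMul v g = p - skewMul r f := by linear_combination -hrep2
  have hdle : (skewMul v g).natDegree < f.natDegree + g.natDegree := by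
    rw [hvgr]
    refine lt_of_le_of_lt (natDegree_sub_le _ _) (max_lt hdeg ?_)
    rcases hub with rfl | hub
    · rw [skewMul_zero_left, natDegree_zero]; omega
    · exact lt_of_le_of_lt (natDegree_skewMul_le _ _) (by omega)
  omega

set_option maxHeartbeats 1000000 in
set_option synthInstance.maxHeartbeats 1000000 in
noncomputable def vecToPoly (N : ℕ) : (Fin N → RatFunc ℝ) →ₗ[RatFunc ℝ] Polynomial (RatFunc ℝ) where
  toFun w := ∑ i : Fin N, C (w i) * X ^ (i : ℕ)
  map_add' a b := by
    simp only [Pi.add_apply, C_add, add_mul]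
    rw [Finset.sum_add_distrib]
  map_smul' c a := by
    show (∑ i : Fin N, C ((c • a) i) * X ^ (i : ℕ)) = c • ∑ i : Fin N, C (a i) * X ^ (i : ℕ)
    rw [Polynomial.smul_eq_C_mul, Finset.mul_sum]
    refine Finset.sum_congr rfl fun i _ => ?_
    have hca : (c • a) i = c * a i := rfl
    rw [hca, C_mul]; ring

lemma vecToPoly_apply (N : ℕ) (w : Fin N → K) :
    vecToPoly N w = ∑ i : Fin N, C (w i) * X ^ (i : ℕ) := rfl

lemma coeff_vecToPoly (N : ℕ) (w : Fin N → K) (j : ℕ) :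
    (vecToPoly N w).coeff j = if h : j < N then w ⟨j, h⟩ else 0 := by
  rw [vecToPoly_apply, finset_sum_coeff]
  simp only [coeff_C_mul, coeff_X_pow]
  by_cases h : j < N
  · rw [dif_pos h, Finset.sum_eq_single (⟨j, h⟩ : Fin N)]
    · simp
    · intro i _ hne
      rw [if_neg, mul_zero]
      exact fun hji => hne (by simp [Fin.ext_iff, ← hji])
    · intro hmem; exact absurd (Finset.mem_univ _) hmem
  · rw [dif_neg h]
    refine Finset.sum_eq_zero fun i _ => ?_
    rw [if_neg, mul_zero]
    intro hji
    exact h (hji ▸ i.isLt)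

lemma vecToPoly_injective (N : ℕ) : Function.Injective (vecToPoly N) := by
  intro a b hab
  funext i
  have := congrArg (fun p => p.coeff (i : ℕ)) hab
  simpa [coeff_vecToPoly, i.isLt] using this

lemma vecToPoly_mem_degreeLT (N : ℕ) (w : Fin N → K) :
    vecToPoly N w ∈ degreeLT K N := by
  rw [mem_degreeLT, degree_lt_iff_coeff_zero]
  intro j hj
  rw [coeff_vecToPoly, dif_neg (by omega)]

lemma vecToPoly_coeffs (N : ℕ) (p : Polynomial K) (hp : p = 0 ∨ p.natDegree < N) :
    vecToPoly N (fun i => p.coeff (i : ℕ)) = p := by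
  rcases hp with rfl | hp
  · simp [vecToPoly_apply]
  · rw [vecToPoly_apply, Fin.sum_univ_eq_sum_range (fun i => C (p.coeff i) * X ^ i) N]
    simp only [C_mul_X_pow_eq_monomial]
    exact (as_sum_range' p N hp).symm

noncomputable def skewMulL (f : Polynomial (RatFunc ℝ)) :
    Polynomial (RatFunc ℝ) →ₗ[RatFunc ℝ] Polynomial (RatFunc ℝ) where
  toFun p := skewMul p f
  map_add' p q := skewMul_add_left p q f
  map_smul' c p := by
    simp only [RingHom.id_apply, Polynomial.smul_eq_C_mul]
    exact skewMul_C_mul_left c p f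

noncomputable def sylv (f g : Polynomial (RatFunc ℝ)) (m n : ℕ) :
    Matrix (Fin (m + n)) (Fin (m + n)) (RatFunc ℝ) :=
  Matrix.of fun i j =>
    if (i : ℕ) < n then (dMul^[(i : ℕ)] f).coeff j
    else (dMul^[(i : ℕ) - n] g).coeff j

lemma key_computation (f g : Polynomial K) (m n : ℕ)
    (hm : f.natDegree = m) (hn : g.natDegree = n) (w : Fin (m + n) → K) :
    vecToPoly (m + n) (Matrix.vecMul w (sylv f g m n)) =
      skewMul (∑ i : Fin n, C (w (Fin.castLE (Nat.le_add_left n m) i)) * X ^ (i : ℕ)) f +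
      skewMul (∑ i : Fin m, C (w ⟨n + (i : ℕ), by omega⟩) * X ^ (i : ℕ)) g := by
  classical
  set W : ℕ → K := fun j => if h : j < m + n then w ⟨j, h⟩ else 0 with hW
  -- row polynomials fit in degreeLT (m+n)
  have hrowf : ∀ i : ℕ, i < n → (dMul^[i] f).natDegree < m + n := fun i hi =>
    lt_of_le_of_lt (natDegree_dMul_iter_le f i) (by omega)
  have hrowg : ∀ i : ℕ, i < m + n → ¬(i < n) → (dMul^[i - n] g).natDegree < m + n := by
    intro i hi hni
    refine lt_of_le_of_lt (natDegree_dMul_iter_le g (i - n)) (by omega)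
  -- expand LHS
  have hLHS : vecToPoly (m + n) (Matrix.vecMul w (sylv f g m n)) =
      ∑ i : Fin (m + n), C (w i) *
        (if (i : ℕ) < n then dMul^[(i : ℕ)] f else dMul^[(i : ℕ) - n] g) := by
    rw [vecToPoly_apply]
    have hentry : ∀ j : Fin (m + n), Matrix.vecMul w (sylv f g m n) j
        = ∑ i : Fin (m + n), w i * (sylv f g m n) i j := by
      intro j; simp [Matrix.vecMul, dotProduct]
    calc ∑ j : Fin (m + n), C (Matrix.vecMul w (sylv f g m n) j) * X ^ (j : ℕ)
        = ∑ j : Fin (m + n), ∑ i : Fin (m + n),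
            C (w i) * (C ((sylv f g m n) i j) * X ^ (j : ℕ)) := by
          refine Finset.sum_congr rfl fun j _ => ?_
          rw [hentry j, map_sum, Finset.sum_mul]
          exact Finset.sum_congr rfl fun i _ => by rw [C_mul]; ring
      _ = ∑ i : Fin (m + n), C (w i) * ∑ j : Fin (m + n),
            C ((sylv f g m n) i j) * X ^ (j : ℕ) := by
          rw [Finset.sum_comm]
          exact Finset.sum_congr rfl fun i _ => by rw [Finset.mul_sum]
      _ = ∑ i : Fin (m + n), C (w i) *
            (if (i : ℕ) < n then dMul^[(i : ℕ)] f else dMul^[(i : ℕ) - n] g) := by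
          refine Finset.sum_congr rfl fun i _ => ?_
          congr 1
          by_cases hi : (i : ℕ) < n
          · have : ∀ j : Fin (m + n), (sylv f g m n) i j = (dMul^[(i : ℕ)] f).coeff (j : ℕ) := by
              intro j; simp [sylv, hi]
            rw [Finset.sum_congr rfl fun j _ => by rw [this j], if_pos hi]
            exact vecToPoly_coeffs (m + n) _ (Or.inr (hrowf _ hi))
          · have : ∀ j : Fin (m + n), (sylv f g m n) i j
                = (dMul^[(i : ℕ) - n] g).coeff (j : ℕ) := by
              intro j; simp [sylv, hi]
            rw [Finset.sum_congr rfl fun j _ => by rw [this j], if_neg hi]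
            exact vecToPoly_coeffs (m + n) _ (Or.inr (hrowg _ i.isLt hi))
  rw [hLHS]
  have hWw : ∀ i : Fin (m + n), w i = W (i : ℕ) := by
    intro i; rw [hW]; simp [i.isLt]
  set H : ℕ → Polynomial K :=
    fun i => C (W i) * (if i < n then dMul^[i] f else dMul^[i - n] g) with hH
  have hLHS2 : ∑ i : Fin (m + n), C (w i) *
        (if (i : ℕ) < n then dMul^[(i : ℕ)] f else dMul^[(i : ℕ) - n] g)
      = ∑ i ∈ Finset.range (m + n), H i := by
    rw [← Fin.sum_univ_eq_sum_range H (m + n)]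
    exact Finset.sum_congr rfl fun i _ => by rw [hH, hWw i]
  have hsplit : ∑ i ∈ Finset.range (m + n), H i
      = ∑ i ∈ Finset.range n, H i + ∑ i ∈ Finset.range m, H (n + i) := by
    rw [show m + n = n + m from Nat.add_comm m n]
    exact Finset.sum_range_add H n m
  rw [hLHS2, hsplit]
  congr 1
  · rw [show skewMul (∑ i : Fin n, C (w (Fin.castLE (Nat.le_add_left n m) i)) * X ^ (i : ℕ)) f
        = ∑ i : Fin n, skewMul (C (w (Fin.castLE (Nat.le_add_left n m) i)) * X ^ (i : ℕ)) f
        from map_sum (skewMulHom f) _ _]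
    rw [← Fin.sum_univ_eq_sum_range H n]
    refine Finset.sum_congr rfl fun i _ => ?_
    have hin : (i : ℕ) < n := i.isLt
    rw [skewMul_monomial, hH]
    simp only [if_pos hin]
    have hW2 : W (i : ℕ) = w (Fin.castLE (Nat.le_add_left n m) i) := by
      rw [hW]
      have h2 : (i : ℕ) < m + n := by omega
      simp only [h2, dif_pos]
      rfl
    rw [hW2]
  · rw [show skewMul (∑ i : Fin m, C (w ⟨n + (i : ℕ), by omega⟩) * X ^ (i : ℕ)) g
        = ∑ i : Fin m, skewMul (C (w ⟨n + (i : ℕ), by omega⟩) * X ^ (i : ℕ)) g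
        from map_sum (skewMulHom g) _ _]
    rw [← Fin.sum_univ_eq_sum_range (fun i => H (n + i)) m]
    refine Finset.sum_congr rfl fun i _ => ?_
    rw [skewMul_monomial, hH]
    simp only [if_neg (show ¬ n + (i : ℕ) < n by omega),
      show n + (i : ℕ) - n = (i : ℕ) by omega]
    have hW2 : W (n + (i : ℕ)) = w ⟨n + (i : ℕ), by omega⟩ := by
      rw [hW]
      have h2 : n + (i : ℕ) < m + n := by omega
      simp only [h2, dif_pos]
    rw [hW2]

def PolyCoeffs (f : Polynomial (RatFunc ℝ)) : Prop :=
  ∀ i, ∃ p : Polynomial ℝ, f.coeff i = algebraMap (Polynomial ℝ) (RatFunc ℝ) p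

lemma skewMulL_injective (d : Polynomial K) (hd : d ≠ 0) :
    Function.Injective (skewMulL d) := by
  intro x y hxy
  have hsub : skewMul (x - y) d = 0 := by
    rw [skewMul_sub_left]
    show skewMulL d x - skewMulL d y = 0
    rw [hxy, sub_self]
  rcases (skewMul_eq_zero_iff _ _).mp hsub with h1 | h1
  · exact sub_eq_zero.mp h1
  · exact absurd h1 hd

/-- deg gcrd(f,g) equals the dimension of the left nullspace of V(f,g) over R(t). -/
theorem gcrd_degree_eq_left_nullity (f g : Polynomial (RatFunc ℝ)) (m n : ℕ)
    (hfd : f.degree = (m : WithBot ℕ)) (hgd : g.degree = (n : WithBot ℕ))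
    (hfp : PolyCoeffs f) (hgp : PolyCoeffs g)
    (h : Polynomial (RatFunc ℝ)) (hG : IsGCRD f g h) :
    h.natDegree =
      Module.finrank (RatFunc ℝ) (LinearMap.ker (Matrix.vecMulLinear (sylv f g m n))) := by
  classical
  have hf0 : f ≠ 0 := fun h0 => by simp [h0] at hfd
  have hg0 : g ≠ 0 := fun h0 => by simp [h0] at hgd
  have hm : f.natDegree = m := natDegree_eq_of_degree_eq_some hfd
  have hn : g.natDegree = n := natDegree_eq_of_degree_eq_some hgd
  obtain ⟨d, hdI, hd0, hdmin⟩ := exists_min_inIdeal f g hf0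
  have hk : h.natDegree = d.natDegree := gcrd_natDegree_eq_min hf0 hg0 hdI hd0 hdmin hG
  set k := d.natDegree with hkdef
  have hdf : SkewRightDvd d f := min_rightDvd hdI hd0 hdmin (inIdeal_self_left f g)
  have hdg : SkewRightDvd d g := min_rightDvd hdI hd0 hdmin (inIdeal_self_right f g)
  have hkm : k ≤ m := by
    have := (natDegree_le_of_rightDvd hdf hf0).2; omega
  -- the image submodule equals multiples of d of degree < m+n
  have hTU : Submodule.map (vecToPoly (m + n))
        (LinearMap.range (Matrix.vecMulLinear (sylv f g m n)))
      = Submodule.map (skewMulL d) (degreeLT K (m + n - k)) := by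
    ext p
    simp only [Submodule.mem_map, LinearMap.mem_range]
    constructor
    · rintro ⟨q, ⟨w, rfl⟩, rfl⟩
      rw [Matrix.vecMulLinear_apply]
      have hkey := key_computation f g m n hm hn w
      have hpI : InIdeal f g (vecToPoly (m + n) (Matrix.vecMul w (sylv f g m n))) :=
        ⟨_, _, hkey⟩
      obtain ⟨t, hpt⟩ := rightDvd_inIdeal hdf hdg hpI
      by_cases hp0 : vecToPoly (m + n) (Matrix.vecMul w (sylv f g m n)) = 0
      · refine ⟨0, Submodule.zero_mem _, ?_⟩
        show skewMul 0 d = _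
        rw [skewMul_zero_left, hp0]
      · have ht0 : t ≠ 0 := fun h1 => hp0 (by rw [hpt, h1, skewMul_zero_left])
        obtain ⟨-, hnd, -⟩ := skewMul_props t d ht0 hd0
        have hplt : (vecToPoly (m + n) (Matrix.vecMul w (sylv f g m n))).natDegree < m + n := by
          have hmem := vecToPoly_mem_degreeLT (m + n) (Matrix.vecMul w (sylv f g m n))
          rw [mem_degreeLT, degree_eq_natDegree hp0] at hmem
          exact_mod_cast hmem
        rw [hpt] at hplt
        refine ⟨t, ?_, hpt.symm⟩
        rw [mem_degreeLT, degree_eq_natDegree ht0]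
        exact_mod_cast (by omega : t.natDegree < m + n - k)
    · rintro ⟨t, ht, rfl⟩
      show ∃ q, (∃ w, (Matrix.vecMulLinear (sylv f g m n)) w = q) ∧
        vecToPoly (m + n) q = skewMul t d
      by_cases ht0 : t = 0
      · refine ⟨0, ⟨0, map_zero _⟩, ?_⟩
        rw [ht0, skewMul_zero_left, map_zero]
      · have htd : t.natDegree < m + n - k := by
          rw [mem_degreeLT, degree_eq_natDegree ht0] at ht
          exact_mod_cast ht
        obtain ⟨hp0, hnd, -⟩ := skewMul_props t d ht0 hd0
        have hpI : InIdeal f g (skewMul t d) := inIdeal_smul t hdI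
        have hdeg : (skewMul t d).natDegree < f.natDegree + g.natDegree := by
          rw [hm, hn, hnd]; omega
        obtain ⟨u, v, hrep, hub, hvb⟩ := bounded_rep hf0 hg0 hpI hdeg hp0
        set w : Fin (m + n) → K :=
          fun i => if h2 : (i : ℕ) < n then u.coeff i else v.coeff ((i : ℕ) - n) with hw
        refine ⟨Matrix.vecMulLinear (sylv f g m n) w, ⟨w, rfl⟩, ?_⟩
        rw [Matrix.vecMulLinear_apply]
        rw [key_computation f g m n hm hn w]
        have hu : (∑ i : Fin n, C (w (Fin.castLE (Nat.le_add_left n m) i)) * X ^ (i : ℕ)) = u := by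
          have heach : ∀ i : Fin n, w (Fin.castLE (Nat.le_add_left n m) i) = u.coeff (i : ℕ) := by
            intro i
            rw [hw]
            simp only [Fin.coe_castLE]
            rw [dif_pos i.isLt]
          rw [Finset.sum_congr rfl fun i _ => by rw [heach i]]
          refine vecToPoly_coeffs n u ?_
          rcases hub with rfl | hub
          · exact Or.inl rfl
          · exact Or.inr (by omega)
        have hv : (∑ i : Fin m, C (w ⟨n + (i : ℕ), by omega⟩) * X ^ (i : ℕ)) = v := by
          have heach : ∀ i : Fin m, w ⟨n + (i : ℕ), by omega⟩ = v.coeff (i : ℕ) := by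
            intro i
            rw [hw]
            simp only []
            rw [dif_neg (by omega : ¬ n + (i : ℕ) < n)]
            congr 1
            omega
          rw [Finset.sum_congr rfl fun i _ => by rw [heach i]]
          refine vecToPoly_coeffs m v ?_
          rcases hvb with rfl | hvb
          · exact Or.inl rfl
          · exact Or.inr (by omega)
        rw [hu, hv, ← hrep]
  -- dimension count
  have h1 : Module.finrank K (LinearMap.range (Matrix.vecMulLinear (sylv f g m n)))
      = Module.finrank K (Submodule.map (vecToPoly (m + n))
          (LinearMap.range (Matrix.vecMulLinear (sylv f g m n)))) :=
    LinearEquiv.finrank_eq (Submodule.equivMapOfInjective _ (vecToPoly_injective (m + n)) _)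
  have h2 : Module.finrank K (Submodule.map (skewMulL d) (degreeLT K (m + n - k)))
      = Module.finrank K (degreeLT K (m + n - k)) :=
    (LinearEquiv.finrank_eq (Submodule.equivMapOfInjective _ (skewMulL_injective d hd0) _)).symm
  have h3 : Module.finrank K (degreeLT K (m + n - k)) = m + n - k := by
    rw [LinearEquiv.finrank_eq (degreeLTEquiv K (m + n - k)), Module.finrank_fin_fun]
  have h4 := LinearMap.finrank_range_add_finrank_ker (Matrix.vecMulLinear (sylv f g m n))
  rw [Module.finrank_fin_fun] at h4
  rw [hTU, h2, h3] at h1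
  rw [hk, hkdef]
  omega
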